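/- Let (G,ψ) be a Γ-gain graph and let H₁, H₂ be connected subgraphs of G with V₀(H₁) = V₀(H₂) = ∅. If H₁ is proper near-balanced, ⟨H₂⟩ ≅ ℤ_p for some prime p, and H₁ ∩ H₂ is connected and unbalanced, then ⟨H₁⟩ ≅ ⟨H₂⟩ ≅ ⟨H₁ ∩ H₂⟩ ≅ ⟨H₁ ∪ H₂⟩. -/

import Mathlib

open scoped Classical

namespace GR

/-- A finite directed multigraph with edge labels ("gains") in a group `Γ` and a
designated finite set of fixed vertices. -/
structure GainedGraph (V E Γ : Type) where
  tail : E → V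
  head : E → V
  gain : E → Γ
  fixed : Finset V

variable {V E Γ : Type} [DecidableEq V] [DecidableEq E] [Fintype V] [Fintype E] [Group Γ]

/-- A subgraph: a set of vertices and a set of edges whose endpoints lie in the vertex set. -/
structure Subgraph (G : GainedGraph V E Γ) where
  verts : Finset V
  edges : Finset E
  tail_mem : ∀ e ∈ edges, G.tail e ∈ verts
  head_mem : ∀ e ∈ edges, G.head e ∈ verts

namespace Subgraph

variable {G : GainedGraph V E Γ}

instance : Top (Subgraph G) :=
  ⟨⟨Finset.univ, Finset.univ, fun _ _ => Finset.mem_univ _, fun _ _ => Finset.mem_univ _⟩⟩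

instance : LE (Subgraph G) :=
  ⟨fun H K => H.verts ⊆ K.verts ∧ H.edges ⊆ K.edges⟩

def union (H K : Subgraph G) : Subgraph G where
  verts := H.verts ∪ K.verts
  edges := H.edges ∪ K.edges
  tail_mem e he := by
    rcases Finset.mem_union.1 he with h | h
    · exact Finset.mem_union_left _ (H.tail_mem e h)
    · exact Finset.mem_union_right _ (K.tail_mem e h)
  head_mem e he := by
    rcases Finset.mem_union.1 he with h | h
    · exact Finset.mem_union_left _ (H.head_mem e h)
    · exact Finset.mem_union_right _ (K.head_mem e h)

def inter (H K : Subgraph G) : Subgraph G where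
  verts := H.verts ∩ K.verts
  edges := H.edges ∩ K.edges
  tail_mem e he := by
    rcases Finset.mem_inter.1 he with ⟨h1, h2⟩
    exact Finset.mem_inter.2 ⟨H.tail_mem e h1, K.tail_mem e h2⟩
  head_mem e he := by
    rcases Finset.mem_inter.1 he with ⟨h1, h2⟩
    exact Finset.mem_inter.2 ⟨H.head_mem e h1, K.head_mem e h2⟩

/-- Delete a vertex together with all edges incident to it. -/
def deleteVertex (H : Subgraph G) (v : V) : Subgraph G where
  verts := H.verts.erase v
  edges := H.edges.filter fun e => G.tail e ≠ v ∧ G.head e ≠ v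
  tail_mem e he := by
    rcases Finset.mem_filter.1 he with ⟨h1, h2, h3⟩
    exact Finset.mem_erase.2 ⟨h2, H.tail_mem e h1⟩
  head_mem e he := by
    rcases Finset.mem_filter.1 he with ⟨h1, h2, h3⟩
    exact Finset.mem_erase.2 ⟨h3, H.head_mem e h1⟩

/-- Delete an edge. -/
def deleteEdge (H : Subgraph G) (f : E) : Subgraph G where
  verts := H.verts
  edges := H.edges.erase f
  tail_mem e he := H.tail_mem e (Finset.mem_of_mem_erase he)
  head_mem e he := H.head_mem e (Finset.mem_of_mem_erase he)

/-- Add an edge (together with its endpoints). -/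
def addEdge (H : Subgraph G) (f : E) : Subgraph G where
  verts := insert (G.tail f) (insert (G.head f) H.verts)
  edges := insert f H.edges
  tail_mem e he := by
    rcases Finset.mem_insert.1 he with rfl | h
    · exact Finset.mem_insert_self _ _
    · exact Finset.mem_insert_of_mem (Finset.mem_insert_of_mem (H.tail_mem e h))
  head_mem e he := by
    rcases Finset.mem_insert.1 he with rfl | h
    · exact Finset.mem_insert_of_mem (Finset.mem_insert_self _ _)
    · exact Finset.mem_insert_of_mem (Finset.mem_insert_of_mem (H.head_mem e h))

/-- The free vertices of a subgraph. -/
def freeVerts (H : Subgraph G) : Finset V := H.verts \ G.fixed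

/-- The fixed vertices of a subgraph. -/
def fixedVerts (H : Subgraph G) : Finset V := H.verts ∩ G.fixed

end Subgraph

/-- The starting vertex of an oriented traversal of an edge. -/
def stepStart (G : GainedGraph V E Γ) (s : E × Bool) : V :=
  if s.2 then G.tail s.1 else G.head s.1

/-- The ending vertex of an oriented traversal of an edge. -/
def stepEnd (G : GainedGraph V E Γ) (s : E × Bool) : V :=
  if s.2 then G.head s.1 else G.tail s.1

/-- The gain contributed by an oriented traversal of an edge. -/
def stepGain (G : GainedGraph V E Γ) (s : E × Bool) : Γ :=
  if s.2 then G.gain s.1 else (G.gain s.1)⁻¹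

/-- `IsWalk G H L u w` : `L` is a walk in the subgraph `H` from `u` to `w`. -/
def IsWalk (G : GainedGraph V E Γ) (H : Subgraph G) : List (E × Bool) → V → V → Prop
  | [], u, w => u = w ∧ u ∈ H.verts
  | s :: L, u, w => s.1 ∈ H.edges ∧ stepStart G s = u ∧ IsWalk G H L (stepEnd G s) w

/-- The gain of a walk. -/
def walkGain (G : GainedGraph V E Γ) (L : List (E × Bool)) : Γ :=
  (L.map (stepGain G)).prod

/-- The vertices visited by a walk starting at `u`. -/
def walkVerts (G : GainedGraph V E Γ) (u : V) (L : List (E × Bool)) : List V :=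
  u :: L.map (stepEnd G)

/-- `⟨H⟩` : the subgroup of `Γ` generated by the gains of all closed walks in `H`
containing no fixed vertex. -/
def gainGroup (G : GainedGraph V E Γ) (H : Subgraph G) : Subgroup Γ :=
  Subgroup.closure
    {g | ∃ u L, IsWalk G H L u u ∧ (∀ x ∈ walkVerts G u L, x ∉ G.fixed) ∧ walkGain G L = g}

/-- A subgraph is balanced if its gain group is trivial. -/
def Balanced (G : GainedGraph V E Γ) (H : Subgraph G) : Prop := gainGroup G H = ⊥

def Reachable (G : GainedGraph V E Γ) (H : Subgraph G) (u w : V) : Prop :=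
  ∃ L, IsWalk G H L u w

def Connected (G : GainedGraph V E Γ) (H : Subgraph G) : Prop :=
  H.verts.Nonempty ∧ ∀ u ∈ H.verts, ∀ w ∈ H.verts, Reachable G H u w

/-- `v` is a cut-vertex of the subgraph `H`. -/
def IsCutVertex (G : GainedGraph V E Γ) (H : Subgraph G) (v : V) : Prop :=
  v ∈ H.verts ∧ ∃ u ∈ H.verts, ∃ w ∈ H.verts, u ≠ v ∧ w ≠ v ∧
    Reachable G H u w ∧ ¬ Reachable G (H.deleteVertex v) u w

/-- `(2,m,l)`-sparsity of the subgraph `K`. -/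
def Sparse (G : GainedGraph V E Γ) (m l : ℤ) (K : Subgraph G) : Prop :=
  ∀ H : Subgraph G, H ≤ K → H.edges.Nonempty →
    (H.edges.card : ℤ) ≤ 2 * (H.freeVerts.card : ℤ) + m * (H.fixedVerts.card : ℤ) - l

/-- `(2,m,l)`-tightness of the subgraph `K`. -/
def Tight (G : GainedGraph V E Γ) (m l : ℤ) (K : Subgraph G) : Prop :=
  Sparse G m l K ∧
    (K.edges.card : ℤ) = 2 * (K.freeVerts.card : ℤ) + m * (K.fixedVerts.card : ℤ) - l

/-- `(2,m,3,l)`-gain-tightness: `(2,m,l)`-tight and every balanced subgraph with a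
nonempty edge set is `(2,3)`-sparse. -/
def GainTight23 (G : GainedGraph V E Γ) (m l : ℤ) (K : Subgraph G) : Prop :=
  Tight G m l K ∧ ∀ H : Subgraph G, H ≤ K → H.edges.Nonempty → Balanced G H →
    (H.edges.card : ℤ) ≤ 2 * (H.verts.card : ℤ) - 3

/-- The subgraph has no fixed vertex. -/
def NoFixed (G : GainedGraph V E Γ) (H : Subgraph G) : Prop :=
  ∀ x ∈ H.verts, x ∉ G.fixed

/-- Near-balanced with base vertex `v` and gain `δ`: unbalanced, and every closed
walk starting at `v` not containing `v` as an internal vertex has gain `1`, `δ` or `δ⁻¹`. -/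
def NearBalancedAt (G : GainedGraph V E Γ) (H : Subgraph G) (v : V) (δ : Γ) : Prop :=
  ¬ Balanced G H ∧ ∀ L, IsWalk G H L v v →
    (∀ x ∈ (L.map (stepEnd G)).dropLast, x ≠ v) → walkGain G L ∈ ({1, δ, δ⁻¹} : Set Γ)

def NearBalanced (G : GainedGraph V E Γ) (H : Subgraph G) : Prop :=
  NoFixed G H ∧ ∃ v ∈ H.verts, ∃ δ : Γ, NearBalancedAt G H v δ

/-- The gain group of `H` is isomorphic to `ℤ_n`. -/
def IsZIso (G : GainedGraph V E Γ) (H : Subgraph G) (n : ℕ) : Prop :=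
  Nonempty (gainGroup G H ≃* Multiplicative (ZMod n))

def ProperNearBalanced (G : GainedGraph V E Γ) (H : Subgraph G) : Prop :=
  NearBalanced G H ∧ ¬ IsZIso G H 2 ∧ ¬ IsZIso G H 3

/-- The set `S_i(k,j)`. -/
def SSet (k j : ℕ) (i : ℤ) : Set ℕ :=
  {n | 2 ≤ n ∧ n ∣ k ∧ (Odd j → n ≠ 2) ∧ ((j : ZMod n) = (i : ZMod n))}

/-- `H` is `S_i(k,j)`. -/
def IsS (G : GainedGraph V E Γ) (k j : ℕ) (i : ℤ) (H : Subgraph G) : Prop :=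
  ∃ n ∈ SSet k j i, IsZIso G H n

/-- `H` is `S_{±1}(k,j)`. -/
def IsSpm (G : GainedGraph V E Γ) (k j : ℕ) (H : Subgraph G) : Prop :=
  IsS G k j (-1) H ∨ IsS G k j 1 H

/-- The function `α_k^j` on (connected) subgraphs. -/
noncomputable def alpha (G : GainedGraph V E Γ) (k j : ℕ) (X : Subgraph G) : ℤ :=
  if Balanced G X then 0
  else if Odd j ∧ IsZIso G X 2 then 1
  else if IsSpm G k j X then 2 - (X.fixedVerts.card : ℤ)
  else if IsS G k j 0 X ∨ (X.fixedVerts.card = 0 ∧ ProperNearBalanced G X) then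
    2 - 2 * (X.fixedVerts.card : ℤ)
  else 3 - 2 * (X.fixedVerts.card : ℤ)

/-- The subgraph spanned by a set of edges. -/
def edgeSpan (G : GainedGraph V E Γ) (F : Finset E) : Subgraph G where
  verts := F.image G.tail ∪ F.image G.head
  edges := F
  tail_mem e he := Finset.mem_union_left _ (Finset.mem_image_of_mem _ he)
  head_mem e he := Finset.mem_union_right _ (Finset.mem_image_of_mem _ he)

/-- The connected component of the edge `e` in the subgraph spanned by `F`. -/
noncomputable def componentOf (G : GainedGraph V E Γ) (F : Finset E) (e : E) : Subgraph G :=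
  edgeSpan G (F.filter fun f => Reachable G (edgeSpan G F) (G.tail e) (G.tail f))

/-- The connected components of the edge set `F`. -/
noncomputable def components (G : GainedGraph V E Γ) (F : Finset E) : Finset (Subgraph G) :=
  F.image (componentOf G F)

/-- The count `f_k^j(F) = Σ_{X ∈ C(F)} (2|V(X)| − 3 + α_k^j(X))`. -/
noncomputable def fCount (G : GainedGraph V E Γ) (k j : ℕ) (F : Finset E) : ℤ :=
  ∑ X ∈ components G F, (2 * (X.verts.card : ℤ) - 3 + alpha G k j X)

/-- `ℤ_k^j`-gain sparsity. -/
def GainSparseKJ (G : GainedGraph V E Γ) (k j : ℕ) (K : Subgraph G) : Prop :=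
  ∀ H : Subgraph G, H ≤ K → H.edges.Nonempty → (H.edges.card : ℤ) ≤ fCount G k j H.edges

/-- `ℤ_k^j`-gain tightness. -/
def GainTightKJ (G : GainedGraph V E Γ) (k j : ℕ) (K : Subgraph G) : Prop :=
  GainSparseKJ G k j K ∧ (K.edges.card : ℤ) = fCount G k j K.edges

/-- The degree of a vertex in a subgraph (a loop counts twice). -/
def degree (G : GainedGraph V E Γ) (K : Subgraph G) (v : V) : ℕ :=
  (K.edges.filter fun e => G.tail e = v).card + (K.edges.filter fun e => G.head e = v).card

def HasLoopAt (G : GainedGraph V E Γ) (K : Subgraph G) (v : V) : Prop :=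
  ∃ e ∈ K.edges, G.tail e = v ∧ G.head e = v

/-- The neighbours of a vertex in a subgraph. -/
def neighbors (G : GainedGraph V E Γ) (K : Subgraph G) (v : V) : Finset V :=
  ((K.edges.filter fun e => G.tail e = v).image G.head) ∪
    ((K.edges.filter fun e => G.head e = v).image G.tail)

/-- The subgraph `K` satisfies the axioms of a `Γ`-gain graph. -/
structure IsGainGraphOn (G : GainedGraph V E Γ) (K : Subgraph G) : Prop where
  fixed_card : K.fixedVerts.card ≤ 1
  same_dir : ∀ e ∈ K.edges, ∀ f ∈ K.edges, e ≠ f → G.tail e = G.tail f →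
    G.head e = G.head f → G.gain e ≠ G.gain f
  opp_dir : ∀ e ∈ K.edges, ∀ f ∈ K.edges, e ≠ f → G.tail e = G.head f →
    G.head e = G.tail f → G.gain e ≠ (G.gain f)⁻¹
  fixed_not_loop : ∀ e ∈ K.edges, G.tail e = G.head e → G.tail e ∉ G.fixed
  fixed_not_parallel : ∀ e ∈ K.edges, ∀ f ∈ K.edges, e ≠ f →
    (G.tail e ∈ G.fixed ∨ G.head e ∈ G.fixed) →
    ({G.tail e, G.head e} : Finset V) ≠ {G.tail f, G.head f}
  loop_gain : ∀ e ∈ K.edges, G.tail e = G.head e → G.gain e ≠ 1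

/-- `H` together with the vertex `v` and all edges of `G₀` incident to `v`. -/
def addVertexEdges (G : GainedGraph V E Γ) (G₀ H : Subgraph G) (v : V) : Subgraph G where
  verts := (H.verts ∪ {v}) ∪
    ((G₀.edges.filter fun e => G.tail e = v ∨ G.head e = v).image G.tail ∪
      (G₀.edges.filter fun e => G.tail e = v ∨ G.head e = v).image G.head)
  edges := H.edges ∪ G₀.edges.filter fun e => G.tail e = v ∨ G.head e = v
  tail_mem e he := by
    rcases Finset.mem_union.1 he with h | h
    · exact Finset.mem_union_left _ (Finset.mem_union_left _ (H.tail_mem e h))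
    · exact Finset.mem_union_right _ (Finset.mem_union_left _ (Finset.mem_image_of_mem _ h))
  head_mem e he := by
    rcases Finset.mem_union.1 he with h | h
    · exact Finset.mem_union_left _ (Finset.mem_union_left _ (H.head_mem e h))
    · exact Finset.mem_union_right _ (Finset.mem_union_right _ (Finset.mem_image_of_mem _ h))

/-- The result of a 1-reduction at `v` adding the edge `f`: delete `v` and all edges at
`v` and add the edge `f`. -/
def reduceAt (G : GainedGraph V E Γ) (G₀ : Subgraph G) (v : V) (f : E) : Subgraph G where
  verts := insert (G.tail f) (insert (G.head f) (G₀.verts.erase v))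
  edges := insert f (G₀.edges.filter fun e => G.tail e ≠ v ∧ G.head e ≠ v)
  tail_mem e he := by
    rcases Finset.mem_insert.1 he with rfl | h
    · exact Finset.mem_insert_self _ _
    · rcases Finset.mem_filter.1 h with ⟨h1, h2, h3⟩
      exact Finset.mem_insert_of_mem
        (Finset.mem_insert_of_mem (Finset.mem_erase.2 ⟨h2, G₀.tail_mem e h1⟩))
  head_mem e he := by
    rcases Finset.mem_insert.1 he with rfl | h
    · exact Finset.mem_insert_of_mem (Finset.mem_insert_self _ _)
    · rcases Finset.mem_filter.1 h with ⟨h1, h2, h3⟩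
      exact Finset.mem_insert_of_mem
        (Finset.mem_insert_of_mem (Finset.mem_erase.2 ⟨h3, G₀.head_mem e h1⟩))

/-- The new edge `f` arises from a 1-reduction at the vertex `v` of `G₀`: its endpoints are
joined to `v` by two distinct edges of `G₀` and its gain is the gain of the corresponding
path of length two through `v`. -/
def IsOneReduction (G : GainedGraph V E Γ) (G₀ : Subgraph G) (v : V) (f : E) : Prop :=
  f ∉ G₀.edges ∧ G.tail f ≠ v ∧ G.head f ≠ v ∧
    ∃ s₁ s₂ : E × Bool, s₁.1 ∈ G₀.edges ∧ s₂.1 ∈ G₀.edges ∧ s₁.1 ≠ s₂.1 ∧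
      stepEnd G s₁ = v ∧ stepStart G s₂ = v ∧
      G.tail f = stepStart G s₁ ∧ G.head f = stepEnd G s₂ ∧
      G.gain f = stepGain G s₁ * stepGain G s₂

/-- Two labelled edges coincide (up to reorientation with gain inversion). -/
def SameEdge (G : GainedGraph V E Γ) (e f : E) : Prop :=
  (G.tail e = G.tail f ∧ G.head e = G.head f ∧ G.gain e = G.gain f) ∨
    (G.tail e = G.head f ∧ G.head e = G.tail f ∧ G.gain e = (G.gain f)⁻¹)

/-- `H` is a blocker of the 1-reduction at `v` adding the edge `f`. -/
def IsBlocker (G : GainedGraph V E Γ) (k j : ℕ) (G₀ : Subgraph G) (v : V) (f : E)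
    (H : Subgraph G) : Prop :=
  H ≤ G₀ ∧ v ∉ H.verts ∧ G.tail f ∈ H.verts ∧ G.head f ∈ H.verts ∧ H.edges.Nonempty ∧
    Connected G (H.addEdge f) ∧
    (H.edges.card : ℤ) = 2 * (H.verts.card : ℤ) - 3 + alpha G k j (H.addEdge f)

/-- The graph `G` extended by one fresh edge `none` with tail `t`, head `h` and gain `g`. -/
def extendGraph (G : GainedGraph V E Γ) (t h : V) (g : Γ) : GainedGraph V (Option E) Γ where
  tail e := e.elim t G.tail
  head e := e.elim h G.head
  gain e := e.elim g G.gain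
  fixed := G.fixed

/-- The whole original graph `G`, viewed inside the extension. -/
def extendTop (G : GainedGraph V E Γ) (t h : V) (g : Γ) : Subgraph (extendGraph G t h g) where
  verts := Finset.univ
  edges := Finset.univ.image Option.some
  tail_mem _ _ := Finset.mem_univ _
  head_mem _ _ := Finset.mem_univ _

/-- There is an admissible 1-reduction at `v`, i.e. a choice of new edge (with
endpoints and gain coming from a path of length two through `v`) such that the
resulting `Γ`-gain graph is well defined and `ℤ_k^j`-gain tight. -/
def AdmissibleOneReductionExists (G : GainedGraph V E Γ) (k j : ℕ) (v : V) : Prop :=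
  ∃ t h : V, ∃ g : Γ,
    IsOneReduction (extendGraph G t h g) (extendTop G t h g) v none ∧
    IsGainGraphOn (extendGraph G t h g)
      (reduceAt (extendGraph G t h g) (extendTop G t h g) v none) ∧
    GainTightKJ (extendGraph G t h g) k j
      (reduceAt (extendGraph G t h g) (extendTop G t h g) v none)

end GR

namespace GR


open List

section Aux

variable {V E Γ : Type} [DecidableEq V] [DecidableEq E] [Fintype V] [Fintype E]
variable [CommGroup Γ] {G : GainedGraph V E Γ}

lemma stepStart_mem {H : Subgraph G} {s : E × Bool} (hs : s.1 ∈ H.edges) :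
    stepStart G s ∈ H.verts := by
  obtain ⟨e, b⟩ := s
  cases b
  · exact H.head_mem _ hs
  · exact H.tail_mem _ hs

lemma stepEnd_mem {H : Subgraph G} {s : E × Bool} (hs : s.1 ∈ H.edges) :
    stepEnd G s ∈ H.verts := by
  obtain ⟨e, b⟩ := s
  cases b
  · exact H.tail_mem _ hs
  · exact H.head_mem _ hs

lemma isWalk_start_mem {H : Subgraph G} {L : List (E × Bool)} {u w : V}
    (h : IsWalk G H L u w) : u ∈ H.verts := by
  cases L with
  | nil => exact h.1 ▸ h.2
  | cons s L => exact h.2.1 ▸ stepStart_mem h.1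

lemma isWalk_end_mem {H : Subgraph G} {L : List (E × Bool)} {u w : V}
    (h : IsWalk G H L u w) : w ∈ H.verts := by
  induction L generalizing u with
  | nil => exact h.1 ▸ h.2
  | cons s L ih => exact ih h.2.2

lemma isWalk_mono {H K : Subgraph G} (hHK : H ≤ K) {L : List (E × Bool)} {u w : V}
    (h : IsWalk G H L u w) : IsWalk G K L u w := by
  induction L generalizing u with
  | nil => exact ⟨h.1, hHK.1 h.2⟩
  | cons s L ih => exact ⟨hHK.2 h.1, h.2.1, ih h.2.2⟩

lemma isWalk_edges_mem {H : Subgraph G} {L : List (E × Bool)} {u w : V}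
    (h : IsWalk G H L u w) {s : E × Bool} (hs : s ∈ L) : s.1 ∈ H.edges := by
  induction L generalizing u with
  | nil => cases hs
  | cons t L ih =>
    rcases List.mem_cons.1 hs with rfl | hs'
    · exact h.1
    · exact ih h.2.2 hs'

lemma isWalk_append {H : Subgraph G} {A B : List (E × Bool)} {u w x : V}
    (h1 : IsWalk G H A u w) (h2 : IsWalk G H B w x) : IsWalk G H (A ++ B) u x := by
  induction A generalizing u with
  | nil => exact h1.1 ▸ h2
  | cons s A ih => exact ⟨h1.1, h1.2.1, ih h1.2.2⟩

lemma isWalk_append_split {H : Subgraph G} {A B : List (E × Bool)} {u x : V}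
    (h : IsWalk G H (A ++ B) u x) : ∃ w, IsWalk G H A u w ∧ IsWalk G H B w x := by
  induction A generalizing u with
  | nil => exact ⟨u, ⟨rfl, isWalk_start_mem h⟩, h⟩
  | cons s A ih =>
    obtain ⟨w, hA, hB⟩ := ih h.2.2
    exact ⟨w, ⟨h.1, h.2.1, hA⟩, hB⟩

lemma walkGain_nil : walkGain G [] = 1 := rfl

lemma walkGain_cons {s : E × Bool} {L : List (E × Bool)} :
    walkGain G (s :: L) = stepGain G s * walkGain G L := by
  simp [walkGain]

lemma walkGain_append {A B : List (E × Bool)} :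
    walkGain G (A ++ B) = walkGain G A * walkGain G B := by
  simp [walkGain]

/-- Reverse a step. -/
def flipStep (s : E × Bool) : E × Bool := (s.1, !s.2)

/-- Reverse a walk. -/
def revWalk (L : List (E × Bool)) : List (E × Bool) := (L.map flipStep).reverse

lemma stepStart_flip (s : E × Bool) : stepStart G (flipStep s) = stepEnd G s := by
  obtain ⟨e, b⟩ := s; cases b <;> rfl

lemma stepEnd_flip (s : E × Bool) : stepEnd G (flipStep s) = stepStart G s := by
  obtain ⟨e, b⟩ := s; cases b <;> rfl

lemma stepGain_flip (s : E × Bool) : stepGain G (flipStep s) = (stepGain G s)⁻¹ := by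
  obtain ⟨e, b⟩ := s
  cases b
  · show G.gain e = (G.gain e)⁻¹⁻¹
    rw [inv_inv]
  · rfl

lemma revWalk_cons (s : E × Bool) (L : List (E × Bool)) :
    revWalk (s :: L) = revWalk L ++ [flipStep s] := by
  simp [revWalk]

lemma isWalk_rev {H : Subgraph G} {L : List (E × Bool)} {u w : V}
    (h : IsWalk G H L u w) : IsWalk G H (revWalk L) w u := by
  induction L generalizing u with
  | nil => exact ⟨h.1.symm, h.1 ▸ h.2⟩
  | cons s L ih =>
    rw [revWalk_cons]
    refine isWalk_append (ih h.2.2) ⟨h.1, stepStart_flip s, ?_, ?_⟩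
    · rw [stepEnd_flip]; exact h.2.1
    · rw [stepEnd_flip, h.2.1]; exact h.2.1 ▸ stepStart_mem h.1

lemma walkGain_rev {L : List (E × Bool)} : walkGain G (revWalk L) = (walkGain G L)⁻¹ := by
  induction L with
  | nil => simp [revWalk, walkGain]
  | cons s L ih =>
    simp [revWalk_cons, walkGain_append, walkGain_cons, walkGain_nil, ih, stepGain_flip,
      mul_inv_rev, mul_comm]

lemma isWalk_vert_mem {H : Subgraph G} {L : List (E × Bool)} {u w x : V}
    (h : IsWalk G H L u w) (hx : x ∈ L.map (stepEnd G)) : x ∈ H.verts := by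
  induction L generalizing u with
  | nil => cases hx
  | cons s L ih =>
    rcases List.mem_cons.1 hx with rfl | hx'
    · exact stepEnd_mem h.1
    · exact ih h.2.2 hx'

lemma gain_mem_gainGroup {H : Subgraph G} (hnf : NoFixed G H) {L : List (E × Bool)} {u : V}
    (h : IsWalk G H L u u) : walkGain G L ∈ gainGroup G H := by
  refine Subgroup.subset_closure ⟨u, L, h, ?_, rfl⟩
  intro x hx
  rcases List.mem_cons.1 hx with rfl | hx'
  · exact hnf _ (isWalk_start_mem h)
  · exact hnf _ (isWalk_vert_mem h hx')

lemma gainGroup_mono {H K : Subgraph G} (hHK : H ≤ K) : gainGroup G H ≤ gainGroup G K := by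
  refine Subgroup.closure_mono ?_
  rintro g ⟨u, L, hw, hf, rfl⟩
  exact ⟨u, L, isWalk_mono hHK hw, hf, rfl⟩

lemma isWalk_getLast {H : Subgraph G} {L : List (E × Bool)} {u w : V}
    (h : IsWalk G H L u w) (hL : L ≠ []) : w = stepEnd G (L.getLast hL) := by
  induction L generalizing u with
  | nil => exact absurd rfl hL
  | cons s L ih =>
    rcases eq_or_ne L [] with rfl | hL'
    · exact h.2.2.1.symm
    · rw [List.getLast_cons hL']
      exact ih h.2.2 hL'

lemma isWalk_restrict {H K : Subgraph G} {L : List (E × Bool)} {u w : V}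
    (h : IsWalk G K L u w) (hall : ∀ s ∈ L, s.1 ∈ H.edges) (hL : L ≠ []) :
    IsWalk G H L u w := by
  induction L generalizing u with
  | nil => exact absurd rfl hL
  | cons s L ih =>
    refine ⟨hall s (List.mem_cons_self), h.2.1, ?_⟩
    rcases eq_or_ne L [] with rfl | hL'
    · exact ⟨h.2.2.1, stepEnd_mem (hall s (List.mem_cons_self))⟩
    · exact ih h.2.2 (fun t ht => hall t (List.mem_cons_of_mem _ ht)) hL'

lemma isWalk_split_at {H : Subgraph G} {L : List (E × Bool)} {u w : V}
    (h : IsWalk G H L u w) {j : ℕ} (hj : j < L.length) :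
    IsWalk G H (L.take (j + 1)) u (stepEnd G L[j]) ∧
      IsWalk G H (L.drop (j + 1)) (stepEnd G L[j]) w := by
  have hsplit : IsWalk G H (L.take (j + 1) ++ L.drop (j + 1)) u w := by
    rw [List.take_append_drop]; exact h
  obtain ⟨x, h1, h2⟩ := isWalk_append_split hsplit
  have hne : L.take (j + 1) ≠ [] := by
    apply List.ne_nil_of_length_pos
    rw [List.length_take]
    omega
  have hx : x = stepEnd G L[j] := by
    rw [isWalk_getLast h1 hne, List.getLast_eq_getElem]
    congr 1
    have hlen : (L.take (j + 1)).length = j + 1 := by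
      rw [List.length_take]; omega
    have : (L.take (j+1))[(L.take (j+1)).length - 1]'(by omega) = L[j] := by
      simp only [hlen, Nat.add_sub_cancel]
      exact List.getElem_take
    exact this
  exact ⟨hx ▸ h1, hx ▸ h2⟩

/-- The set of gains of closed walks at `v` with no internal occurrence of `v`. -/
def TSet (H : Subgraph G) (v : V) : Set Γ :=
  {g | ∃ M, IsWalk G H M v v ∧ (∀ x ∈ (M.map (stepEnd G)).dropLast, x ≠ v) ∧ walkGain G M = g}

lemma gain_mem_closure_TSet {H : Subgraph G} {v : V} :
    ∀ L, IsWalk G H L v v → walkGain G L ∈ Subgroup.closure (TSet H v) := by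
  suffices key : ∀ n L, L.length ≤ n → IsWalk G H L v v →
      walkGain G L ∈ Subgroup.closure (TSet H v) by
    intro L h; exact key L.length L le_rfl h
  intro n
  induction n with
  | zero =>
    intro L hlen h
    rw [List.length_eq_zero_iff.1 (Nat.le_zero.1 hlen)]
    exact one_mem _
  | succ n ih =>
    intro L hlen h
    by_cases hv : v ∈ (L.map (stepEnd G)).dropLast
    · obtain ⟨j, hj, hjv⟩ := List.mem_iff_getElem.1 hv
      have hj' : j < L.length - 1 := by
        simpa [List.length_dropLast] using hj
      have hjL : j < L.length := by omega
      have hv' : stepEnd G L[j] = v := by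
        rw [← hjv, List.getElem_dropLast, List.getElem_map]
      obtain ⟨h1, h2⟩ := isWalk_split_at h hjL
      rw [hv'] at h1 h2
      have hgain : walkGain G L = walkGain G (L.take (j+1)) * walkGain G (L.drop (j+1)) := by
        rw [← walkGain_append, List.take_append_drop]
      rw [hgain]
      refine mul_mem (ih _ ?_ h1) (ih _ ?_ h2)
      · rw [List.length_take]; omega
      · rw [List.length_drop]; omega
    · exact Subgroup.subset_closure ⟨L, h, fun x hx hxv => hv (hxv ▸ hx), rfl⟩

lemma exists_walk_avoid {H : Subgraph G} {v u : V} :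
    ∀ L, IsWalk G H L v u → ∃ P, IsWalk G H P v u ∧ ∀ x ∈ P.map (stepEnd G), x ≠ v := by
  suffices key : ∀ n L, L.length ≤ n → IsWalk G H L v u →
      ∃ P, IsWalk G H P v u ∧ ∀ x ∈ P.map (stepEnd G), x ≠ v by
    intro L h; exact key L.length L le_rfl h
  intro n
  induction n with
  | zero =>
    intro L hlen h
    have hL : L = [] := List.length_eq_zero_iff.1 (Nat.le_zero.1 hlen)
    subst hL
    exact ⟨[], h, by simp⟩
  | succ n ih =>
    intro L hlen h
    by_cases hv : v ∈ L.map (stepEnd G)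
    · obtain ⟨j, hj, hjv⟩ := List.mem_iff_getElem.1 hv
      have hjL : j < L.length := by simpa using hj
      have hv' : stepEnd G L[j] = v := by rw [← hjv, List.getElem_map]
      obtain ⟨-, h2⟩ := isWalk_split_at h hjL
      rw [hv'] at h2
      refine ih _ ?_ h2
      rw [List.length_drop]; omega
    · exact ⟨L, h, fun x hx hxv => hv (hxv ▸ hx)⟩

lemma map_stepStart_concat {H : Subgraph G} {L : List (E × Bool)} {u w : V}
    (h : IsWalk G H L u w) : L.map (stepStart G) ++ [w] = u :: L.map (stepEnd G) := by
  induction L generalizing u with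
  | nil => rw [h.1]; rfl
  | cons s L ih =>
    simp only [List.map_cons, List.cons_append, h.2.1]
    rw [ih h.2.2]

lemma map_stepEnd_revWalk {L : List (E × Bool)} :
    (revWalk L).map (stepEnd G) = (L.map (stepStart G)).reverse := by
  rw [revWalk, List.map_reverse, List.map_map]
  congr 1
  exact List.map_congr_left fun s _ => stepEnd_flip s

lemma conj_gain {P W : List (E × Bool)} :
    walkGain G (P ++ W ++ revWalk P) = walkGain G W := by
  rw [walkGain_append, walkGain_append, walkGain_rev]
  rw [mul_comm (walkGain G P) (walkGain G W), mul_assoc, mul_inv_cancel, mul_one]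

/-- A conjugated closed walk: if `W` is a closed walk at `u` and `P` a walk from `v` to `u`,
then `P ++ W ++ rev P` is a closed walk at `v` with the same gain. -/
lemma isWalk_conj {H : Subgraph G} {P W : List (E × Bool)} {v u : V}
    (hP : IsWalk G H P v u) (hW : IsWalk G H W u u) :
    IsWalk G H (P ++ W ++ revWalk P) v v :=
  isWalk_append (isWalk_append hP hW) (isWalk_rev hP)

/-- If `H` is connected and near-balanced at `v`, its gain group lies in `⟨δ⟩`. -/
lemma gainGroup_le_zpowers {H : Subgraph G} {v : V} {δ : Γ}
    (hc : Connected G H) (hv : v ∈ H.verts) (hnb : NearBalancedAt G H v δ) :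
    gainGroup G H ≤ Subgroup.zpowers δ := by
  have hT : TSet H v ⊆ (Subgroup.zpowers δ : Subgroup Γ) := by
    rintro g ⟨M, hM, hint, rfl⟩
    rcases hnb.2 M hM hint with h1 | h1 | h1 <;> rw [h1]
    · exact one_mem _
    · exact Subgroup.mem_zpowers δ
    · exact inv_mem (Subgroup.mem_zpowers δ)
  refine (Subgroup.closure_le _).2 ?_
  rintro g ⟨u, L, hw, -, rfl⟩
  obtain ⟨P, hP⟩ := hc.2 v hv u (isWalk_start_mem hw)
  have hmem := gain_mem_closure_TSet _ (isWalk_conj hP hw)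
  rw [conj_gain] at hmem
  exact (Subgroup.closure_le _).2 hT hmem

lemma subgroup_eq_of_le_prime {A B : Subgroup Γ} {q : ℕ} (hle : A ≤ B) (hA : A ≠ ⊥)
    (hB : Nat.card B = q) (hq : q.Prime) : A = B := by
  haveI : Finite B := Nat.finite_of_card_ne_zero (by rw [hB]; exact hq.pos.ne')
  have hdvd : Nat.card A ∣ q := hB ▸ Subgroup.card_dvd_of_le hle
  rcases (Nat.Prime.eq_one_or_self_of_dvd hq _ hdvd) with h1 | h1
  · exact absurd (Subgroup.card_eq_one.1 h1) hA
  · exact Subgroup.eq_of_le_of_card_ge hle (by rw [hB, h1])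

end Aux


section Union

variable {V E Γ : Type} [DecidableEq V] [DecidableEq E] [Fintype V] [Fintype E]
variable [CommGroup Γ] {G : GainedGraph V E Γ}

lemma inter_le_left {H₁ H₂ : Subgraph G} : H₁.inter H₂ ≤ H₁ :=
  ⟨Finset.inter_subset_left, Finset.inter_subset_left⟩

lemma inter_le_right {H₁ H₂ : Subgraph G} : H₁.inter H₂ ≤ H₂ :=
  ⟨Finset.inter_subset_right, Finset.inter_subset_right⟩

lemma left_le_union {H₁ H₂ : Subgraph G} : H₁ ≤ H₁.union H₂ :=
  ⟨Finset.subset_union_left, Finset.subset_union_left⟩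

lemma right_le_union {H₁ H₂ : Subgraph G} : H₂ ≤ H₁.union H₂ :=
  ⟨Finset.subset_union_right, Finset.subset_union_right⟩

lemma leTrans {H K M : Subgraph G} (h1 : H ≤ K) (h2 : K ≤ M) : H ≤ M :=
  ⟨h1.1.trans h2.1, h1.2.trans h2.2⟩

lemma gainGroup_union_le {H₁ H₂ : Subgraph G} {N : Subgroup Γ}
    (hnf₁ : NoFixed G H₁) (hnf₂ : NoFixed G H₂)
    (hc₁ : Connected G H₁) (hc₂ : Connected G H₂)
    (hcI : Connected G (H₁.inter H₂))
    (h1 : gainGroup G H₁ ≤ N) (h2 : gainGroup G H₂ ≤ N) :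
    gainGroup G (H₁.union H₂) ≤ N := by
  classical
  have halg : ∀ a b c q : Γ, a * (b * c) = (b * q⁻¹) * (a * (q * c)) := by
    intro a b c q
    simp [mul_assoc, mul_left_comm, mul_comm]
  set nb : E × Bool → Bool := fun s => decide (s.1 ∉ H₁.edges) with hnbdef
  have key : ∀ n L c, L.countP nb ≤ n → IsWalk G (H₁.union H₂) L c c →
      c ∈ (H₁.inter H₂).verts → walkGain G L ∈ N := by
    intro n
    induction n using Nat.strong_induction_on with
    | _ n ih =>
    intro L c hm hw hcv
    by_cases hall : ∀ s ∈ L, s.1 ∈ H₁.edges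
    · cases L with
      | nil => exact one_mem _
      | cons s L' =>
        exact h1 (gain_mem_gainGroup hnf₁ (isWalk_restrict hw hall (List.cons_ne_nil _ _)))
    · push_neg at hall
      obtain ⟨s₀, hs₀L, hs₀⟩ := hall
      set p : E × Bool → Bool := fun s => decide (s.1 ∈ H₁.edges) with hpdef
      have hLAR : L = L.takeWhile p ++ L.dropWhile p := (List.takeWhile_append_dropWhile (p := p) (l := L)).symm
      have hRne : L.dropWhile p ≠ [] := by
        intro hnil
        apply hs₀
        have hmem : s₀ ∈ L.takeWhile p := by
          rw [hLAR, hnil, List.append_nil] at hs₀L; exact hs₀L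
        simpa [hpdef] using List.mem_takeWhile_imp hmem
      obtain ⟨r, R', hRr⟩ := List.exists_cons_of_ne_nil hRne
      have hr1 : r.1 ∉ H₁.edges := by
        have h := List.head_dropWhile_not p (l := L)
        rw [hRr] at h
        simpa [hpdef] using h (List.cons_ne_nil r R')
      obtain ⟨d, hAw, hRw⟩ := isWalk_append_split (hLAR ▸ hw)
      rw [hRr] at hRw
      have hr2 : r.1 ∈ H₂.edges := by
        rcases Finset.mem_union.1 hRw.1 with h | h
        · exact absurd h hr1
        · exact h
      have hAall : ∀ s ∈ L.takeWhile p, s.1 ∈ H₁.edges := by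
        intro s hs
        simpa [hpdef] using List.mem_takeWhile_imp hs
      have hd1 : d ∈ H₁.verts := by
        rcases eq_or_ne (L.takeWhile p) [] with hAnil | hAne
        · rw [hAnil] at hAw
          exact hAw.1 ▸ (Finset.mem_inter.1 hcv).1
        · exact isWalk_end_mem (isWalk_restrict hAw hAall hAne)
      have hd2 : d ∈ H₂.verts := hRw.2.1 ▸ stepStart_mem (H := H₂) hr2
      have hd : d ∈ (H₁.inter H₂).verts := Finset.mem_inter.2 ⟨hd1, hd2⟩
      set q : E × Bool → Bool := fun s => decide (s.1 ∈ H₂.edges) with hqdef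
      have hBC : (r :: R' : List (E × Bool)) = (r :: R').takeWhile q ++ (r :: R').dropWhile q :=
        (List.takeWhile_append_dropWhile (p := q)).symm
      obtain ⟨e, hBw, hCw⟩ := isWalk_append_split (hBC ▸ hRw)
      have hBeq : (r :: R').takeWhile q = r :: R'.takeWhile q := by
        rw [List.takeWhile_cons, if_pos (by simpa [hqdef] using hr2)]
      have hBne : (r :: R').takeWhile q ≠ [] := by rw [hBeq]; exact List.cons_ne_nil _ _
      have hBall : ∀ s ∈ (r :: R').takeWhile q, s.1 ∈ H₂.edges := by
        intro s hs
        simpa [hqdef] using List.mem_takeWhile_imp hs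
      have hBH₂ : IsWalk G H₂ ((r :: R').takeWhile q) d e := isWalk_restrict hBw hBall hBne
      have he2 : e ∈ H₂.verts := isWalk_end_mem hBH₂
      have he1 : e ∈ H₁.verts := by
        rcases eq_or_ne ((r :: R').dropWhile q) [] with hCnil | hCne
        · rw [hCnil] at hCw
          exact hCw.1 ▸ (Finset.mem_inter.1 hcv).1
        · obtain ⟨t, C', hCt⟩ := List.exists_cons_of_ne_nil hCne
          have hheadC := List.head_dropWhile_not q (l := r :: R')
          rw [hCt] at hheadC hCw
          have ht2 : t.1 ∉ H₂.edges := by simpa [hqdef] using hheadC (List.cons_ne_nil t C')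
          have ht1 : t.1 ∈ H₁.edges := by
            rcases Finset.mem_union.1 hCw.1 with h | h
            · exact h
            · exact absurd h ht2
          exact hCw.2.1 ▸ stepStart_mem (H := H₁) ht1
      have he : e ∈ (H₁.inter H₂).verts := Finset.mem_inter.2 ⟨he1, he2⟩
      obtain ⟨Q, hQ⟩ := hcI.2 d hd e he
      have hQ₂ : IsWalk G H₂ Q d e := isWalk_mono inter_le_right hQ
      have hBQ : walkGain G ((r :: R').takeWhile q) * (walkGain G Q)⁻¹ ∈ N := by
        have hmem := gain_mem_gainGroup hnf₂ (isWalk_append hBH₂ (isWalk_rev hQ₂))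
        rw [walkGain_append, walkGain_rev] at hmem
        exact h2 hmem
      have hw' : IsWalk G (H₁.union H₂) (L.takeWhile p ++ (Q ++ (r :: R').dropWhile q)) c c :=
        isWalk_append hAw
          (isWalk_append (isWalk_mono (leTrans inter_le_left left_le_union) hQ) hCw)
      have hcQ : ∀ s ∈ Q, s.1 ∈ H₁.edges := by
        intro s hs
        exact Finset.mem_inter.1 (isWalk_edges_mem hQ hs) |>.1
      have hcountA : (L.takeWhile p).countP nb = 0 := by
        rw [List.countP_eq_zero]
        intro s hs
        simp [hnbdef, hAall s hs]
      have hcountQ : Q.countP nb = 0 := by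
        rw [List.countP_eq_zero]
        intro s hs
        simp [hnbdef, hcQ s hs]
      have hcountB : 0 < ((r :: R').takeWhile q).countP nb := by
        rw [List.countP_pos_iff]
        refine ⟨r, ?_, by simp [hnbdef, hr1]⟩
        rw [hBeq]; exact List.mem_cons_self
      have hcountL : L.countP nb =
          ((r :: R').takeWhile q).countP nb + ((r :: R').dropWhile q).countP nb := by
        conv_lhs => rw [hLAR, hRr, hBC]
        rw [List.countP_append, List.countP_append, hcountA, Nat.zero_add]
      have hCn : ((r :: R').dropWhile q).countP nb < n := by omega
      have hcount' : (L.takeWhile p ++ (Q ++ (r :: R').dropWhile q)).countP nb =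
          ((r :: R').dropWhile q).countP nb := by
        rw [List.countP_append, List.countP_append, hcountA, hcountQ]
        omega
      have hrec := ih _ hCn _ c (le_of_eq hcount') hw' hcv
      have hgainL : walkGain G L = walkGain G (L.takeWhile p) *
          (walkGain G ((r :: R').takeWhile q) * walkGain G ((r :: R').dropWhile q)) := by
        conv_lhs => rw [hLAR, hRr, hBC]
        rw [walkGain_append, walkGain_append]
      rw [hgainL, halg _ _ _ (walkGain G Q)]
      refine mul_mem hBQ ?_
      rw [← walkGain_append, ← walkGain_append]
      exact hrec
  refine (Subgroup.closure_le _).2 ?_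
  rintro g ⟨u, L, hw, -, rfl⟩
  obtain ⟨c, hcVI⟩ := hcI.1
  rcases Finset.mem_union.1 (isWalk_start_mem hw) with hu1 | hu2
  · obtain ⟨P, hP⟩ := hc₁.2 c (Finset.mem_inter.1 hcVI).1 u hu1
    have hres := key _ _ c le_rfl (isWalk_conj (isWalk_mono left_le_union hP) hw) hcVI
    rwa [conj_gain] at hres
  · obtain ⟨P, hP⟩ := hc₂.2 c (Finset.mem_inter.1 hcVI).2 u hu2
    have hres := key _ _ c le_rfl (isWalk_conj (isWalk_mono right_le_union hP) hw) hcVI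
    rwa [conj_gain] at hres

end Union

/-- Let `H₁, H₂` be connected subgraphs with no fixed vertex.  If `H₁`
is proper near-balanced, `⟨H₂⟩ ≅ ℤ_p` for a prime `p`, and `H₁ ∩ H₂` is connected and
unbalanced, then `⟨H₁⟩ ≅ ⟨H₂⟩ ≅ ⟨H₁ ∩ H₂⟩ ≅ ⟨H₁ ∪ H₂⟩`. -/
theorem proper_near_balanced_union_prime {V E : Type} [DecidableEq V] [DecidableEq E]
    [Fintype V] [Fintype E] (k : ℕ) (hk : 0 < k)
    (G : GainedGraph V E (Multiplicative (ZMod k)))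
    (hG : IsGainGraphOn G (⊤ : Subgraph G))
    (H₁ H₂ : Subgraph G)
    (hnf₁ : NoFixed G H₁) (hnf₂ : NoFixed G H₂)
    (hc₁ : Connected G H₁) (hc₂ : Connected G H₂)
    (hpnb : ProperNearBalanced G H₁)
    (p : ℕ) (hp : p.Prime) (hiso : IsZIso G H₂ p)
    (hcI : Connected G (H₁.inter H₂)) (hunbal : ¬ Balanced G (H₁.inter H₂)) :
    Nonempty (gainGroup G H₁ ≃* gainGroup G H₂) ∧
      Nonempty (gainGroup G H₂ ≃* gainGroup G (H₁.inter H₂)) ∧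
      Nonempty (gainGroup G (H₁.inter H₂) ≃* gainGroup G (H₁.union H₂)) := by
  classical
  haveI : NeZero k := ⟨hk.ne'⟩
  obtain ⟨⟨hnfH₁', v, hvH₁, δ, hnb⟩, hni2, hni3⟩ := hpnb
  set N := Subgroup.zpowers δ with hNdef
  have hnfI : NoFixed G (H₁.inter H₂) := fun x hx => hnf₁ x (Finset.mem_inter.1 hx).1
  have hH1le : gainGroup G H₁ ≤ N := gainGroup_le_zpowers hc₁ hvH₁ hnb
  have hH1ne : gainGroup G H₁ ≠ ⊥ := hnb.1
  have hδ1 : δ ≠ 1 := by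
    rintro rfl
    refine hH1ne (le_bot_iff.1 ?_)
    rwa [hNdef, Subgroup.zpowers_eq_bot.2 rfl] at hH1le
  have horder : ∀ n : ℕ, n.Prime → orderOf δ = n → IsZIso G H₁ n := by
    intro n hn hord
    have hcard : Nat.card N = n := by rw [hNdef, Nat.card_zpowers, hord]
    have heq : gainGroup G H₁ = N := subgroup_eq_of_le_prime hH1le hH1ne hcard hn
    refine ⟨(MulEquiv.subgroupCongr heq).trans (mulEquivOfCyclicCardEq ?_)⟩
    rw [hcard, Nat.card_congr Multiplicative.toAdd, Nat.card_zmod]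
  have hδ2 : δ ^ 2 ≠ 1 := by
    intro h2
    exact hni2 (horder 2 Nat.prime_two
      (haveI := Fact.mk Nat.prime_two; orderOf_eq_prime h2 hδ1))
  have hδ3 : δ ^ 3 ≠ 1 := by
    intro h3
    exact hni3 (horder 3 Nat.prime_three
      (haveI := Fact.mk Nat.prime_three; orderOf_eq_prime h3 hδ1))
  have hkey : ∀ g : (Multiplicative (ZMod k)), g ∈ ({1, δ, δ⁻¹} : Set (Multiplicative (ZMod k))) → g ^ 2 ∈ ({1, δ, δ⁻¹} : Set (Multiplicative (ZMod k))) →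
      g = 1 := by
    intro g hg hg2
    simp only [Set.mem_insert_iff, Set.mem_singleton_iff] at hg hg2
    rcases hg with rfl | rfl | rfl
    · rfl
    · exfalso
      rcases hg2 with h | h | h
      · exact hδ2 h
      · exact hδ1 (by rw [pow_two] at h; exact mul_eq_left.1 h)
      · exact hδ3 (by rw [show (3 : ℕ) = 2 + 1 from rfl, pow_succ, h, inv_mul_cancel])
    · exfalso
      rcases hg2 with h | h | h
      · exact hδ2 (inv_eq_one.1 (by rw [← inv_pow]; exact h))
      · have h' : δ ^ 2 = δ⁻¹ := by
          rw [inv_pow] at h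
          exact inv_eq_iff_eq_inv.1 h
        exact hδ3 (by rw [show (3 : ℕ) = 2 + 1 from rfl, pow_succ, h', inv_mul_cancel])
      · refine hδ1 (inv_eq_one.1 ?_)
        rw [pow_two] at h
        exact mul_eq_left.1 h
  -- obtain a nontrivial closed walk in the intersection
  have hSI : ∃ g, (∃ u L, IsWalk G (H₁.inter H₂) L u u ∧
      (∀ x ∈ walkVerts G u L, x ∉ G.fixed) ∧ walkGain G L = g) ∧ g ≠ 1 := by
    by_contra hcon
    push_neg at hcon
    refine hunbal (Subgroup.closure_eq_bot_iff.2 ?_)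
    rintro g hg
    exact hcon g hg
  obtain ⟨g, ⟨u, L, hwI, hfI, hgL⟩, hg1⟩ := hSI
  -- the base vertex v lies in the intersection
  have hvVI : v ∈ (H₁.inter H₂).verts := by
    by_contra hvI
    have hu : u ∈ (H₁.inter H₂).verts := isWalk_start_mem hwI
    obtain ⟨P₀, hP₀⟩ := hc₁.2 v hvH₁ u (Finset.mem_inter.1 hu).1
    obtain ⟨P, hPw, hPav⟩ := exists_walk_avoid _ hP₀
    have hPne : P ≠ [] := by
      rintro rfl
      exact hvI (hPw.1 ▸ hu)
    have hcond : ∀ W, IsWalk G (H₁.inter H₂) W u u →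
        walkGain G W ∈ ({1, δ, δ⁻¹} : Set (Multiplicative (ZMod k))) := by
      intro W hWI
      have hWH₁ : IsWalk G H₁ W u u := isWalk_mono inter_le_left hWI
      have hfull : IsWalk G H₁ (P ++ W ++ revWalk P) v v := isWalk_conj hPw hWH₁
      have hint : ∀ x ∈ (((P ++ W ++ revWalk P)).map (stepEnd G)).dropLast, x ≠ v := by
        have hsP := map_stepStart_concat hPw
        obtain ⟨a, t, hat⟩ : ∃ a t, P.map (stepStart G) = a :: t := by
          cases hmp : P.map (stepStart G) with
          | nil =>
            exfalso
            exact hPne (List.map_eq_nil_iff.1 hmp)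
          | cons a t => exact ⟨a, t, rfl⟩
        rw [hat] at hsP
        have hip := List.cons_eq_cons.1 (by simpa using hsP :
          a :: (t ++ [u]) = v :: P.map (stepEnd G))
        have ha : a = v := hip.1
        have htt : t ++ [u] = P.map (stepEnd G) := hip.2
        rw [List.map_append, List.map_append, map_stepEnd_revWalk, hat, ha,
          List.reverse_cons, ← List.append_assoc, List.dropLast_concat]
        intro x hx
        rcases List.mem_append.1 hx with hx' | hxt
        · rcases List.mem_append.1 hx' with hxP | hxW
          · exact hPav x hxP
          · intro hxv
            exact hvI (hxv ▸ isWalk_vert_mem hWI hxW)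
        · have : x ∈ t ++ [u] := List.mem_append_left _ (List.mem_reverse.1 hxt)
          exact hPav x (htt ▸ this)
      have hres := hnb.2 _ hfull hint
      rwa [conj_gain] at hres
    have h1 := hcond L hwI
    have h2 := hcond (L ++ L) (isWalk_append hwI hwI)
    rw [walkGain_append, hgL, ← pow_two] at h2
    rw [hgL] at h1
    exact hg1 (hkey g h1 h2)
  -- δ lies in the gain group of the intersection
  have hδD : δ ∈ gainGroup G (H₁.inter H₂) := by
    by_contra hδD
    refine hunbal (Subgroup.closure_eq_bot_iff.2 ?_)
    rintro g' ⟨u', L', hw', hf', rfl⟩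
    have hTsub : TSet (H₁.inter H₂) v ⊆ {(1 : (Multiplicative (ZMod k)))} := by
      rintro g'' ⟨M, hM, hMint, rfl⟩
      have hone := hnb.2 M (isWalk_mono inter_le_left hM) hMint
      have hmemD : walkGain G M ∈ gainGroup G (H₁.inter H₂) := gain_mem_gainGroup hnfI hM
      simp only [Set.mem_insert_iff, Set.mem_singleton_iff] at hone
      rcases hone with h | h | h
      · simp [h]
      · exact absurd (h ▸ hmemD) hδD
      · exact absurd (inv_mem (h ▸ hmemD) : δ⁻¹⁻¹ ∈ _) (by simpa using hδD)
    have hclos : Subgroup.closure (TSet (H₁.inter H₂) v) = ⊥ :=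
      Subgroup.closure_eq_bot_iff.2 hTsub
    obtain ⟨P, hP⟩ := hcI.2 v hvVI u' (isWalk_start_mem hw')
    have hmem := gain_mem_closure_TSet _ (isWalk_conj hP hw')
    rw [conj_gain, hclos, Subgroup.mem_bot] at hmem
    simp [hmem]
  have hNleD : N ≤ gainGroup G (H₁.inter H₂) := Subgroup.zpowers_le.2 hδD
  have hDle1 : gainGroup G (H₁.inter H₂) ≤ gainGroup G H₁ := gainGroup_mono inter_le_left
  have hEq1 : gainGroup G H₁ = gainGroup G (H₁.inter H₂) :=
    le_antisymm (hH1le.trans hNleD) hDle1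
  have hDN : gainGroup G (H₁.inter H₂) = N := le_antisymm (hDle1.trans hH1le) hNleD
  obtain ⟨e₂⟩ := hiso
  have hcard2 : Nat.card (gainGroup G H₂) = p := by
    rw [Nat.card_congr e₂.toEquiv, Nat.card_congr Multiplicative.toAdd, Nat.card_zmod]
  have hEq2 : gainGroup G (H₁.inter H₂) = gainGroup G H₂ :=
    subgroup_eq_of_le_prime (gainGroup_mono inter_le_right) hunbal hcard2 hp
  have hUeq : gainGroup G (H₁.union H₂) = gainGroup G (H₁.inter H₂) := by
    refine le_antisymm ?_ (gainGroup_mono (leTrans inter_le_left left_le_union))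
    have hH2le : gainGroup G H₂ ≤ N := by rw [← hEq2, hDN]
    exact (gainGroup_union_le hnf₁ hnf₂ hc₁ hc₂ hcI hH1le hH2le).trans (le_of_eq hDN.symm)
  exact ⟨⟨MulEquiv.subgroupCongr (hEq1.trans hEq2)⟩, ⟨MulEquiv.subgroupCongr hEq2.symm⟩,
    ⟨MulEquiv.subgroupCongr hUeq.symm⟩⟩

end GR
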